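/- Let n ≥ 1, let S₀, …, S_{n−1} ∈ Im ℍ be purely imaginary quaternions, let λ, ρ ∈ ℝ, and set U_k = [[λ, −ρ − S_k],[ρ + S_k, λ]]. Let H = U_{n−1}⋯U_1·U_0 be their ordered product. Then detC(H) = ∏_{k=0}^{n−1} ((λ + ρ·i)² − ‖S_k‖²) in ℂ, where for a quaternionic 2×2 matrix A we define trC(A) = 2·Re(A₀₀) + 2·Re(A₁₀)·i ∈ ℂ and detC(A) = (1/2)·((trC A)² − trC(A²)). In particular detC(H) vanishes precisely when ρ = 0 and λ = ±‖S_k‖ for some k. -/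

import Mathlib

open Quaternion

/-- The matrix `[[λ, −ρ − S],[ρ + S, λ]]` appearing in the Lax pair. -/
noncomputable def laxMat (S : ℍ[ℝ]) (lam rho : ℝ) : Matrix (Fin 2) (Fin 2) ℍ[ℝ] :=
  !![(lam : ℍ[ℝ]), -(rho : ℍ[ℝ]) - S; (rho : ℍ[ℝ]) + S, (lam : ℍ[ℝ])]

/-- The ordered product `A_{k−1} ⋯ A_1 · A_0` of a sequence of matrices. -/
noncomputable def ordProd (A : ℕ → Matrix (Fin 2) (Fin 2) ℍ[ℝ]) :
    ℕ → Matrix (Fin 2) (Fin 2) ℍ[ℝ]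
  | 0 => 1
  | k + 1 => A k * ordProd A k

/-- The complex trace of a quaternionic 2×2 matrix:
`trC(A) = 2·Re(A₀₀) + 2·Re(A₁₀)·i`. -/
noncomputable def trC (A : Matrix (Fin 2) (Fin 2) ℍ[ℝ]) : ℂ :=
  (2 * (A 0 0).re : ℝ) + (2 * (A 1 0).re : ℝ) * Complex.I

/-- The complex determinant of a quaternionic 2×2 matrix:
`detC(A) = (1/2)·((trC A)² − trC(A²))`. -/
noncomputable def detC (A : Matrix (Fin 2) (Fin 2) ℍ[ℝ]) : ℂ :=
  (1 / 2 : ℂ) * ((trC A) ^ 2 - trC (A * A))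

noncomputable def qre (q : Quaternion ℂ) : ℍ[ℝ] := ⟨q.re.re, q.imI.re, q.imJ.re, q.imK.re⟩
noncomputable def qim (q : Quaternion ℂ) : ℍ[ℝ] := ⟨q.re.im, q.imI.im, q.imJ.im, q.imK.im⟩

noncomputable def psi (q : Quaternion ℂ) : Matrix (Fin 2) (Fin 2) ℍ[ℝ] :=
  !![qre q, -qim q; qim q, qre q]

lemma qre_mul (p q : Quaternion ℂ) : qre (p * q) = qre p * qre q - qim p * qim q := by
  apply Quaternion.ext <;>
    simp [Quaternion.re_mul, Quaternion.imI_mul, Quaternion.imJ_mul,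
      Quaternion.imK_mul] <;>
    simp [qre, qim, Quaternion.re_mul, Quaternion.imI_mul, Quaternion.imJ_mul,
      Quaternion.imK_mul, Complex.mul_re, Complex.mul_im] <;>
    ring

lemma qim_mul (p q : Quaternion ℂ) : qim (p * q) = qre p * qim q + qim p * qre q := by
  apply Quaternion.ext <;>
    simp [Quaternion.re_mul, Quaternion.imI_mul, Quaternion.imJ_mul,
      Quaternion.imK_mul] <;>
    simp [qre, qim, Quaternion.re_mul, Quaternion.imI_mul, Quaternion.imJ_mul,
      Quaternion.imK_mul, Complex.mul_re, Complex.mul_im] <;>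
    ring

lemma psi_one : psi 1 = 1 := by
  have h1 : qre 1 = 1 := by apply Quaternion.ext <;> simp [qre]
  have h2 : qim 1 = 0 := by apply Quaternion.ext <;> simp [qim]
  simp only [psi, h1, h2, neg_zero]
  refine Matrix.ext fun i j => ?_
  fin_cases i <;> fin_cases j <;> simp [Matrix.one_apply]

lemma psi_mul (p q : Quaternion ℂ) : psi (p * q) = psi p * psi q := by
  simp only [psi, qre_mul, qim_mul]
  refine Matrix.ext fun i j => ?_
  fin_cases i <;> fin_cases j <;>
    simp [Matrix.mul_apply, Fin.sum_univ_two] <;> abel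

lemma trC_psi (q : Quaternion ℂ) : trC (psi q) = 2 * q.re := by
  simp [trC, psi, qre, qim, Complex.ext_iff]

lemma detC_psi (q : Quaternion ℂ) : detC (psi q) = Quaternion.normSq q := by
  rw [detC, ← psi_mul, trC_psi, trC_psi]
  have : ((Quaternion.normSq q : ℂ) : ℂ) = q.re ^ 2 + q.imI ^ 2 + q.imJ ^ 2 + q.imK ^ 2 :=
    Quaternion.normSq_def' q
  rw [this, Quaternion.re_mul]
  ring

noncomputable def qprod (q : ℕ → Quaternion ℂ) : ℕ → Quaternion ℂ
  | 0 => 1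
  | k + 1 => q k * qprod q k

lemma ordProd_psi (q : ℕ → Quaternion ℂ) (n : ℕ) :
    ordProd (fun k => psi (q k)) n = psi (qprod q n) := by
  induction n with
  | zero => simp [ordProd, qprod, psi_one]
  | succ k ih => simp [ordProd, qprod, psi_mul, ih]

lemma normSq_qprod (q : ℕ → Quaternion ℂ) (n : ℕ) :
    Quaternion.normSq (qprod q n) = ∏ k ∈ Finset.range n, Quaternion.normSq (q k) := by
  induction n with
  | zero => simp [qprod]
  | succ k ih => rw [qprod, map_mul, ih, Finset.prod_range_succ, mul_comm]

lemma laxMat_eq_psi (S : ℍ[ℝ]) (hS : S.re = 0) (lam rho : ℝ) :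
    laxMat S lam rho = psi ⟨⟨lam, rho⟩, ⟨0, S.imI⟩, ⟨0, S.imJ⟩, ⟨0, S.imK⟩⟩ := by
  have h1 : qre ⟨⟨lam, rho⟩, ⟨0, S.imI⟩, ⟨0, S.imJ⟩, ⟨0, S.imK⟩⟩ = (lam : ℍ[ℝ]) := by
    apply Quaternion.ext <;> simp [qre]
  have h2 : qim ⟨⟨lam, rho⟩, ⟨0, S.imI⟩, ⟨0, S.imJ⟩, ⟨0, S.imK⟩⟩ = (rho : ℍ[ℝ]) + S := by
    apply Quaternion.ext <;> simp [qim, hS]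
  unfold psi
  rw [h1, h2, laxMat]
  congr 1
  abel

lemma ordProd_congr (A B : ℕ → Matrix (Fin 2) (Fin 2) ℍ[ℝ]) (n : ℕ)
    (h : ∀ k < n, A k = B k) : ordProd A n = ordProd B n := by
  induction n with
  | zero => rfl
  | succ m ih =>
      rw [ordProd, ordProd, h m (Nat.lt_succ_self m),
        ih fun k hk => h k (hk.trans (Nat.lt_succ_self m))]

lemma normSq_q (S : ℍ[ℝ]) (hS : S.re = 0) (lam rho : ℝ) :
    (Quaternion.normSq (⟨⟨lam, rho⟩, ⟨0, S.imI⟩, ⟨0, S.imJ⟩, ⟨0, S.imK⟩⟩ : Quaternion ℂ) : ℂ) =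
      ((lam : ℂ) + (rho : ℂ) * Complex.I) ^ 2 - ((‖S‖ ^ 2 : ℝ) : ℂ) := by
  have hn : (‖S‖ ^ 2 : ℝ) = S.imI ^ 2 + S.imJ ^ 2 + S.imK ^ 2 := by
    rw [sq, ← Quaternion.normSq_eq_norm_mul_self, Quaternion.normSq_def', hS]
    ring
  have h2 : (Quaternion.normSq (⟨⟨lam, rho⟩, ⟨0, S.imI⟩, ⟨0, S.imJ⟩, ⟨0, S.imK⟩⟩ :
      Quaternion ℂ) : ℂ) = (⟨lam, rho⟩ : ℂ) ^ 2 + (⟨0, S.imI⟩ : ℂ) ^ 2 + (⟨0, S.imJ⟩ : ℂ) ^ 2 +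
      (⟨0, S.imK⟩ : ℂ) ^ 2 := Quaternion.normSq_def' _
  rw [h2, hn]
  apply Complex.ext <;> simp [Complex.ext_iff, pow_two, Complex.mul_re, Complex.mul_im] <;> ring

theorem detC_of_monodromy
    (n : ℕ) (hn : 1 ≤ n) (S : ℕ → ℍ[ℝ]) (hS : ∀ k < n, (S k).re = 0)
    (lam rho : ℝ) :
    detC (ordProd (fun k => laxMat (S k) lam rho) n) =
        ∏ k ∈ Finset.range n,
          (((lam : ℂ) + (rho : ℂ) * Complex.I) ^ 2 - ((‖S k‖ ^ 2 : ℝ) : ℂ)) ∧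
      (detC (ordProd (fun k => laxMat (S k) lam rho) n) = 0 ↔
        ∃ k < n, rho = 0 ∧ (lam = ‖S k‖ ∨ lam = -‖S k‖)) := by
  set q : ℕ → Quaternion ℂ :=
    fun k => ⟨⟨lam, rho⟩, ⟨0, (S k).imI⟩, ⟨0, (S k).imJ⟩, ⟨0, (S k).imK⟩⟩ with hq
  have hord : detC (ordProd (fun k => laxMat (S k) lam rho) n) =
      ∏ k ∈ Finset.range n,
        (((lam : ℂ) + (rho : ℂ) * Complex.I) ^ 2 - ((‖S k‖ ^ 2 : ℝ) : ℂ)) := by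
    rw [ordProd_congr _ (fun k => psi (q k)) n
      (fun k hk => laxMat_eq_psi (S k) (hS k hk) lam rho),
      ordProd_psi, detC_psi, normSq_qprod]
    refine Finset.prod_congr rfl fun k hk => ?_
    exact normSq_q (S k) (hS k (Finset.mem_range.mp hk)) lam rho
  refine ⟨hord, ?_⟩
  rw [hord, Finset.prod_eq_zero_iff]
  constructor
  · rintro ⟨k, hk, hzero⟩
    refine ⟨k, Finset.mem_range.mp hk, ?_⟩
    have h2 : ((lam : ℂ) + (rho : ℂ) * Complex.I - (‖S k‖ : ℂ)) *
        ((lam : ℂ) + (rho : ℂ) * Complex.I + (‖S k‖ : ℂ)) = 0 := by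
      rw [← hzero]; push_cast; ring
    rcases mul_eq_zero.mp h2 with h | h
    · rw [sub_eq_zero] at h
      have hre := congrArg Complex.re h
      have him := congrArg Complex.im h
      simp at hre him
      exact ⟨him, Or.inl hre⟩
    · have hre := congrArg Complex.re h
      have him := congrArg Complex.im h
      simp at hre him
      refine ⟨him, Or.inr ?_⟩
      linarith
  · rintro ⟨k, hk, hrho, hlam⟩
    refine ⟨k, Finset.mem_range.mpr hk, ?_⟩
    subst hrho
    rcases hlam with h | h <;> subst h <;> push_cast <;> ring
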